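/- Let A be a finite set, i ∈ A, and v : 2^A → ℝ≥0 monotone. For any inspection distribution p over 2^A, define p' by p'({i}) = Σ_{S : i ∈ S} p(S), p'(S) = 0 for S ∋ i with S ≠ {i}, and p'(S) = p(S) for S ∌ i. Then for every j ∈ A \ {i}: Σ_{S : {i,j} ∩ S ≠ ∅} p(S) = Σ_{S : {i,j} ∩ S ≠ ∅} p'(S), and consequently the agent's utility from every action is identical under (i, α, p) and (i, α, p'), while the expected inspection cost satisfies Σ_S p'(S)·v(S) ≤ Σ_S p(S)·v(S). -/

import Mathlib

theorem stmt15 {A : Type*} [Fintype A] [DecidableEq A]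
    (f c : A → ℝ) (α : ℝ)
    (v : Finset A → ℝ) (hvmono : ∀ S T : Finset A, S ⊆ T → v S ≤ v T)
    (p : Finset A → ℝ) (hp0 : ∀ S, 0 ≤ p S) (hp1 : ∑ S : Finset A, p S = 1)
    (i : A) (p' : Finset A → ℝ)
    (hp'i : p' {i} = ∑ S ∈ Finset.univ.filter (fun S : Finset A => i ∈ S), p S)
    (hp'0 : ∀ S : Finset A, i ∈ S → S ≠ {i} → p' S = 0)
    (hp'e : ∀ S : Finset A, i ∉ S → p' S = p S) :
    (∀ j : A, j ≠ i →
      (∑ S ∈ Finset.univ.filter (fun S : Finset A => i ∈ S ∨ j ∈ S), p S) =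
      (∑ S ∈ Finset.univ.filter (fun S : Finset A => i ∈ S ∨ j ∈ S), p' S))
    ∧ (∀ j : A,
      (if j = i then α * f i - c i
       else α * f j * (1 - ∑ S ∈ Finset.univ.filter
          (fun S : Finset A => i ∈ S ∨ j ∈ S), p S) - c j) =
      (if j = i then α * f i - c i
       else α * f j * (1 - ∑ S ∈ Finset.univ.filter
          (fun S : Finset A => i ∈ S ∨ j ∈ S), p' S) - c j))
    ∧ ∑ S : Finset A, p' S * v S ≤ ∑ S : Finset A, p S * v S := by
  classical
  -- key: sum of p' over sets containing i equals sum of p over sets containing i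
  have hfA : ∑ S ∈ Finset.univ.filter (fun S : Finset A => i ∈ S), p' S
      = ∑ S ∈ Finset.univ.filter (fun S : Finset A => i ∈ S), p S := by
    rw [Finset.sum_eq_single_of_mem ({i} : Finset A)]
    · exact hp'i
    · simp
    · intro S hS hne
      exact hp'0 S (Finset.mem_filter.mp hS).2 hne
  have key : ∀ j : A,
      (∑ S ∈ Finset.univ.filter (fun S : Finset A => i ∈ S ∨ j ∈ S), p S) =
      (∑ S ∈ Finset.univ.filter (fun S : Finset A => i ∈ S ∨ j ∈ S), p' S) := by
    intro j
    have split : ∀ q : Finset A → ℝ,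
        (∑ S ∈ Finset.univ.filter (fun S : Finset A => i ∈ S ∨ j ∈ S), q S)
        = (∑ S ∈ Finset.univ.filter (fun S : Finset A => i ∈ S), q S)
          + ∑ S ∈ Finset.univ.filter (fun S : Finset A => i ∉ S ∧ j ∈ S), q S := by
      intro q
      rw [← Finset.sum_filter_add_sum_filter_not
        (Finset.univ.filter (fun S : Finset A => i ∈ S ∨ j ∈ S)) (fun S => i ∈ S)]
      congr 1
      · congr 1
        ext S
        simp only [Finset.mem_filter, Finset.mem_univ, true_and]
        tauto
      · congr 1
        ext S
        simp only [Finset.mem_filter, Finset.mem_univ, true_and]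
        tauto
    rw [split p, split p', hfA]
    congr 1
    exact Finset.sum_congr rfl (fun S hS =>
      (hp'e S (Finset.mem_filter.mp hS).2.1).symm)
  refine ⟨fun j _ => key j, fun j => ?_, ?_⟩
  · by_cases h : j = i
    · simp [h]
    · simp only [h, if_false, key j]
  · -- cost comparison
    have split : ∀ q : Finset A → ℝ,
        (∑ S : Finset A, q S)
        = (∑ S ∈ Finset.univ.filter (fun S : Finset A => i ∈ S), q S)
          + ∑ S ∈ Finset.univ.filter (fun S : Finset A => i ∉ S), q S := by
      intro q
      exact (Finset.sum_filter_add_sum_filter_not Finset.univ (fun S => i ∈ S) q).symm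
    rw [split (fun S => p' S * v S), split (fun S => p S * v S)]
    have h2 : (∑ S ∈ Finset.univ.filter (fun S : Finset A => i ∉ S), p' S * v S)
        = ∑ S ∈ Finset.univ.filter (fun S : Finset A => i ∉ S), p S * v S :=
      Finset.sum_congr rfl (fun S hS => by
        rw [hp'e S (Finset.mem_filter.mp hS).2])
    rw [h2]
    apply add_le_add_left
    have h1 : (∑ S ∈ Finset.univ.filter (fun S : Finset A => i ∈ S), p' S * v S)
        = p' {i} * v {i} := by
      rw [Finset.sum_eq_single_of_mem ({i} : Finset A)]
      · simp
      · intro S hS hne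
        rw [hp'0 S (Finset.mem_filter.mp hS).2 hne, zero_mul]
    rw [h1, hp'i, Finset.sum_mul]
    apply Finset.sum_le_sum
    intro S hS
    have hiS : i ∈ S := (Finset.mem_filter.mp hS).2
    exact mul_le_mul_of_nonneg_left
      (hvmono _ _ (Finset.singleton_subset_iff.mpr hiS)) (hp0 S)
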